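/- Let p be a prime and a, b, a′, b′ ≥ 0 integers. Then p^a·L(p^b) ⊆ p^{a′}·L(p^{b′}) holds if and only if a ≥ a′ and a + b ≥ a′ + b′; and in that case the index satisfies |p^{a′}·L(p^{b′}) : p^a·L(p^b)| = p^{(a−a′)n + (b−b′)(n−1)}. -/

import Mathlib

open Pointwise

/-- The matrix by which the adjacent transposition `(k k+1)` acts:
`E^{k,k-1} + 2 E^{k,k} + E^{k,k+1} - I_n` (indices `1,…,n` in the paper,
here shifted to `0,…,n-1`; out-of-range `E^{i,j}` are `0`). -/
def craigA (n : ℕ) (k : Fin n) : Matrix (Fin n) (Fin n) ℚ :=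
  Matrix.of fun i j =>
    (if (i : ℕ) = (k : ℕ) ∧ (j : ℕ) + 1 = (k : ℕ) then 1 else 0)
    + (if (i : ℕ) = (k : ℕ) ∧ (j : ℕ) = (k : ℕ) then 2 else 0)
    + (if (i : ℕ) = (k : ℕ) ∧ (j : ℕ) = (k : ℕ) + 1 then 1 else 0)
    - (if i = j then 1 else 0)

/-- `v = e_n + Σ_{i=1}^{n-1} (-1)^{n+1-i} i e_i` (with `e_i` the standard basis,
shifted to `0`-based indexing). -/
def craigV (n : ℕ) : Fin n → ℚ :=
  fun j => if (j : ℕ) = n - 1 then 1 else (-1 : ℚ) ^ (n - (j : ℕ)) * ((j : ℕ) + 1)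

/-- `L(d) = (⊕_{i=1}^{n-1} ℤ·d·e_i) ⊕ ℤ·v` as a `ℤ`-submodule of `ℚ^n`. -/
def craigL (n : ℕ) (d : ℕ) : Submodule ℤ (Fin n → ℚ) :=
  Submodule.span ℤ
    (insert (craigV n) {x | ∃ j : Fin n, (j : ℕ) < n - 1 ∧ x = (d : ℚ) • (Pi.single j 1 : Fin n → ℚ)})

/-- A `ℤ`-submodule is invariant under the action `ρ` of `𝔖_{n+1}`. -/
def Invar {n : ℕ} (ρ : Equiv.Perm (Fin (n + 1)) →* Matrix (Fin n) (Fin n) ℚ)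
    (N : Submodule ℤ (Fin n → ℚ)) : Prop :=
  ∀ g : Equiv.Perm (Fin (n + 1)), ∀ x ∈ N, (ρ g).mulVec x ∈ N

/-- `N` is a `ℤG`-sublattice of `M`. -/
def IsSubl {n : ℕ} (ρ : Equiv.Perm (Fin (n + 1)) →* Matrix (Fin n) (Fin n) ℚ)
    (M N : Submodule ℤ (Fin n → ℚ)) : Prop :=
  N ≤ M ∧ Invar ρ N

/-- The index `|M : N|` of `N` in `M` as additive subgroups (`0` if infinite). -/
noncomputable def subIndex {n : ℕ} (N M : Submodule ℤ (Fin n → ℚ)) : ℕ :=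
  AddSubgroup.relIndex N.toAddSubgroup M.toAddSubgroup

/-- Isomorphism of `ℤG`-lattices: a `ℤ`-linear isomorphism commuting with the
action of every `ρ g`. -/
def IsZGIso {n : ℕ} (ρ : Equiv.Perm (Fin (n + 1)) →* Matrix (Fin n) (Fin n) ℚ)
    (N N' : Submodule ℤ (Fin n → ℚ)) : Prop :=
  ∃ e : N ≃ₗ[ℤ] N',
    ∀ (g : Equiv.Perm (Fin (n + 1))) (x : N)
      (hx : (ρ g).mulVec (x : Fin n → ℚ) ∈ N),
      ((e ⟨(ρ g).mulVec (x : Fin n → ℚ), hx⟩ : N') : Fin n → ℚ)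
        = (ρ g).mulVec ((e x : N') : Fin n → ℚ)

/-- `N` is a `p`-maximal sublattice of `M`: a maximal element of the set of
proper `ℤG`-sublattices of `M` containing `p·M`. -/
def IsPMaximal {n : ℕ} (ρ : Equiv.Perm (Fin (n + 1)) →* Matrix (Fin n) (Fin n) ℚ)
    (p : ℕ) (M N : Submodule ℤ (Fin n → ℚ)) : Prop :=
  (IsSubl ρ M N ∧ N ≠ M ∧ (p : ℚ) • M ≤ N) ∧
    ∀ N' : Submodule ℤ (Fin n → ℚ),
      IsSubl ρ M N' → N' ≠ M → (p : ℚ) • M ≤ N' → N ≤ N' → N' = N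

/-- `rad_p(M)`: the intersection of all `p`-maximal sublattices of `M`. -/
def radP {n : ℕ} (ρ : Equiv.Perm (Fin (n + 1)) →* Matrix (Fin n) (Fin n) ℚ)
    (p : ℕ) (M : Submodule ℤ (Fin n → ℚ)) : Submodule ℤ (Fin n → ℚ) :=
  sInf {N | IsPMaximal ρ p M N}

/-- `Φ_p(M)`: the `ℤG`-sublattices `L` of `M` with `rad_p(M) ⊆ L ⊆ M`. -/
def PhiP {n : ℕ} (ρ : Equiv.Perm (Fin (n + 1)) →* Matrix (Fin n) (Fin n) ℚ)
    (p : ℕ) (M : Submodule ℤ (Fin n → ℚ)) : Set (Submodule ℤ (Fin n → ℚ)) :=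
  {L | IsSubl ρ M L ∧ radP ρ p M ≤ L}

/-- `μ_p(M, L) = Σ_J (-1)^{|J|}` over subsets `J` of `max_p(M)` with
`∩_{N ∈ J} N = L` (the empty intersection being `M`). -/
noncomputable def muP {n : ℕ}
    (ρ : Equiv.Perm (Fin (n + 1)) →* Matrix (Fin n) (Fin n) ℚ)
    (p : ℕ) (M L : Submodule ℤ (Fin n → ℚ)) : ℤ :=
  ∑ᶠ J ∈ {J : Finset (Submodule ℤ (Fin n → ℚ)) |
      (∀ N ∈ J, IsPMaximal ρ p M N) ∧ M ⊓ J.inf id = L},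
    (-1 : ℤ) ^ J.card



section CraigStmt7Aux

/-- The generators of `craigL (m+2) d`, indexed by `Fin (m+2)`. -/
def craigGens (m d : ℕ) (j : Fin (m + 2)) : Fin (m + 2) → ℚ :=
  if j = Fin.last (m + 1) then craigV (m + 2)
  else (d : ℚ) • (Pi.single j 1 : Fin (m + 2) → ℚ)

lemma craigL_eq_span_range (m d : ℕ) :
    craigL (m + 2) d = Submodule.span ℤ (Set.range (craigGens m d)) := by
  unfold craigL
  congr 1
  ext x
  simp only [Set.mem_insert_iff, Set.mem_setOf_eq, Set.mem_range]
  constructor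
  · rintro (rfl | ⟨j, hj, rfl⟩)
    · exact ⟨Fin.last (m + 1), by simp [craigGens]⟩
    · refine ⟨j, ?_⟩
      rw [craigGens, if_neg]
      intro h
      rw [h] at hj
      simp at hj
  · rintro ⟨j, rfl⟩
    by_cases h : j = Fin.last (m + 1)
    · left; simp [craigGens, h]
    · right
      refine ⟨j, ?_, ?_⟩
      · have h1 := j.isLt
        have h2 : (j : ℕ) ≠ m + 1 := fun hh => h (Fin.ext (by simpa using hh))
        omega
      · rw [craigGens, if_neg h]

/-- The generic element of `q • craigL (m+2) d` with integer coordinates `c`. -/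
def craigF (m : ℕ) (q : ℚ) (d : ℕ) (c : Fin (m + 2) → ℤ) : Fin (m + 2) → ℚ :=
  fun i => if i = Fin.last (m + 1) then q * c i
    else q * (c i * d + c (Fin.last (m + 1)) * craigV (m + 2) i)

lemma craigV_last (m : ℕ) : craigV (m + 2) (Fin.last (m + 1)) = 1 := by
  simp [craigV]

lemma sum_smul_craigGens (m d : ℕ) (q : ℚ) (c : Fin (m + 2) → ℤ) :
    (∑ j, c j • (q • craigGens m d j)) = craigF m q d c := by
  funext i
  have hterm : ∀ j : Fin (m + 2),
      (c j • (q • craigGens m d j)) i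
        = (if j = Fin.last (m + 1) then
              (c (Fin.last (m + 1)) : ℚ) * (q * craigV (m + 2) i) else 0)
          + (if j = i then
              (if i = Fin.last (m + 1) then 0 else (c i : ℚ) * (q * d)) else 0) := by
    intro j
    have hval : (c j • (q • craigGens m d j)) i = (c j : ℚ) * (q * craigGens m d j i) := by
      simp
    rw [hval]
    by_cases hj : j = Fin.last (m + 1)
    · subst hj
      rw [if_pos rfl, craigGens, if_pos rfl]
      by_cases hi : Fin.last (m + 1) = i
      · rw [if_pos hi, if_pos hi.symm, ← hi, add_zero]
      · rw [if_neg hi, add_zero]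
    · rw [if_neg hj, craigGens, if_neg hj, zero_add]
      by_cases hji : j = i
      · subst hji
        rw [if_pos rfl, if_neg hj]
        have : (Pi.single j 1 : Fin (m + 2) → ℚ) j = 1 := by simp
        simp only [Pi.smul_apply, this, smul_eq_mul, mul_one]
      · rw [if_neg hji]
        have : (Pi.single j 1 : Fin (m + 2) → ℚ) i = 0 := by
          rw [Pi.single_apply, if_neg (fun h => hji h.symm)]
        simp [this]
  rw [Finset.sum_apply]
  calc (∑ j, (c j • (q • craigGens m d j)) i)
      = ∑ j : Fin (m + 2),
          ((if j = Fin.last (m + 1) then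
              (c (Fin.last (m + 1)) : ℚ) * (q * craigV (m + 2) i) else 0)
          + (if j = i then
              (if i = Fin.last (m + 1) then 0 else (c i : ℚ) * (q * d)) else 0)) :=
        Finset.sum_congr rfl (fun j _ => hterm j)
    _ = craigF m q d c i := by
        rw [Finset.sum_add_distrib, Finset.sum_ite_eq' Finset.univ,
          Finset.sum_ite_eq' Finset.univ]
        simp only [Finset.mem_univ, if_true]
        by_cases hi : i = Fin.last (m + 1)
        · subst hi
          rw [if_pos rfl, craigF, if_pos rfl, craigV_last]
          ring
        · rw [if_neg hi, craigF, if_neg hi]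
          ring

lemma mem_smul_craigL (m d : ℕ) (q : ℚ) (x : Fin (m + 2) → ℚ) :
    x ∈ q • craigL (m + 2) d ↔ ∃ c : Fin (m + 2) → ℤ, x = craigF m q d c := by
  rw [craigL_eq_span_range, Submodule.smul_span, Set.smul_set_range,
    Submodule.mem_span_range_iff_exists_fun]
  simp_rw [sum_smul_craigGens]
  exact exists_congr fun c => eq_comm

end CraigStmt7Aux

/-- Lemma 2(2): `p^a·L(p^b) ⊆ p^{a'}·L(p^{b'})` iff `a ≥ a'` and
`a+b ≥ a'+b'`; and in that case
`|p^{a'}·L(p^{b'}) : p^a·L(p^b)| = p^{(a-a')n + (b-b')(n-1)}`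
(the exponent being an integer, a priori in `ℤ`). -/
theorem subset_and_index_of_scaled_L (n : ℕ) (hn : 2 ≤ n)
    (p : ℕ) (hp : p.Prime) (a b a' b' : ℕ) :
    ((((p : ℚ) ^ a) • craigL n (p ^ b) ≤ ((p : ℚ) ^ a') • craigL n (p ^ b')) ↔
      (a' ≤ a ∧ a' + b' ≤ a + b)) ∧
    (a' ≤ a → a' + b' ≤ a + b →
      ((subIndex (((p : ℚ) ^ a) • craigL n (p ^ b))
          (((p : ℚ) ^ a') • craigL n (p ^ b')) : ℚ))
        = (p : ℚ) ^ (((a : ℤ) - a') * n + ((b : ℤ) - b') * (n - 1))) := by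
  obtain ⟨m, rfl⟩ : ∃ m, n = m + 2 := ⟨n - 2, by omega⟩
  have hp1 : 1 < p := hp.one_lt
  have hpQ : (p : ℚ) ≠ 0 := Nat.cast_ne_zero.mpr hp.pos.ne'
  have hpZ : (p : ℤ) ≠ 0 := Int.natCast_ne_zero.mpr hp.pos.ne'
  have hlast0 : Fin.last (m + 1) ≠ (0 : Fin (m + 2)) := by
    simp [Fin.ext_iff]
  -- the "backward" containment
  have hsub : ∀ A B A' B' : ℕ, A' ≤ A → A' + B' ≤ A + B →
      ((p : ℚ) ^ A) • craigL (m + 2) (p ^ B) ≤ ((p : ℚ) ^ A') • craigL (m + 2) (p ^ B') := by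
    intro A B A' B' h1 h2 x hx
    rw [mem_smul_craigL] at hx ⊢
    obtain ⟨c, rfl⟩ := hx
    have e1 : (p : ℚ) ^ A' * (p : ℚ) ^ (A - A') = (p : ℚ) ^ A := by
      rw [← pow_add]; congr 1; omega
    have e2 : (p : ℚ) ^ A' * ((p : ℚ) ^ (A + B - (A' + B')) * (p : ℚ) ^ B')
        = (p : ℚ) ^ A * (p : ℚ) ^ B := by
      rw [← pow_add, ← pow_add, ← pow_add]; congr 1; omega
    refine ⟨fun i => if i = Fin.last (m + 1) then (p : ℤ) ^ (A - A') * c i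
      else (p : ℤ) ^ (A + B - (A' + B')) * c i, ?_⟩
    funext i
    by_cases hi : i = Fin.last (m + 1)
    · subst hi
      simp only [craigF, if_pos rfl]
      push_cast
      linear_combination (-(c (Fin.last (m + 1)) : ℚ)) * e1
    · simp only [craigF, if_neg hi, if_pos rfl]
      push_cast
      linear_combination (-(c i : ℚ)) * e2
        + (-((c (Fin.last (m + 1)) : ℚ) * craigV (m + 2) i)) * e1
  constructor
  · constructor
    · -- forward direction
      intro h
      constructor
      · have h1 : craigF m ((p : ℚ) ^ a) (p ^ b)
            (fun i => if i = Fin.last (m + 1) then 1 else 0)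
            ∈ ((p : ℚ) ^ a) • craigL (m + 2) (p ^ b) :=
          (mem_smul_craigL _ _ _ _).mpr ⟨_, rfl⟩
        have h2 := h h1
        rw [mem_smul_craigL] at h2
        obtain ⟨c, hc⟩ := h2
        have hl := congrFun hc (Fin.last (m + 1))
        simp [craigF] at hl
        have hz : (p : ℤ) ^ a = (p : ℤ) ^ a' * c (Fin.last (m + 1)) := by
          exact_mod_cast hl
        have hdvd : p ^ a' ∣ p ^ a := by
          have : (p : ℤ) ^ a' ∣ (p : ℤ) ^ a := ⟨_, hz⟩
          exact_mod_cast this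
        exact (Nat.pow_dvd_pow_iff_le_right hp1).mp hdvd
      · have h1 : craigF m ((p : ℚ) ^ a) (p ^ b)
            (fun i => if i = (0 : Fin (m + 2)) then 1 else 0)
            ∈ ((p : ℚ) ^ a) • craigL (m + 2) (p ^ b) :=
          (mem_smul_craigL _ _ _ _).mpr ⟨_, rfl⟩
        have h2 := h h1
        rw [mem_smul_craigL] at h2
        obtain ⟨c, hc⟩ := h2
        have hl := congrFun hc (Fin.last (m + 1))
        simp [craigF, hlast0] at hl
        have hclast : c (Fin.last (m + 1)) = 0 := by
          rcases hl with h' | h' <;> omega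
        have h0 := congrFun hc (0 : Fin (m + 2))
        simp [craigF, Ne.symm hlast0, hclast] at h0
        have hzq : ((p : ℚ)) ^ (a + b) = (p : ℚ) ^ (a' + b') * (c (0 : Fin (m + 2)) : ℚ) := by
          linear_combination h0
        have hz : (p : ℤ) ^ (a + b) = (p : ℤ) ^ (a' + b') * c (0 : Fin (m + 2)) := by
          exact_mod_cast hzq
        have hdvd : p ^ (a' + b') ∣ p ^ (a + b) := by
          have : (p : ℤ) ^ (a' + b') ∣ (p : ℤ) ^ (a + b) := ⟨_, hz⟩
          exact_mod_cast this
        exact (Nat.pow_dvd_pow_iff_le_right hp1).mp hdvd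
    · rintro ⟨h1, h2⟩
      exact hsub a b a' b' h1 h2
  · -- the index computation
    intro h1 h2
    set φ : (Fin (m + 2) → ℤ) →+ (Fin (m + 2) → ℚ) :=
      { toFun := craigF m ((p : ℚ) ^ a') (p ^ b')
        map_zero' := by funext i; simp [craigF]
        map_add' := by
          intro x y
          funext i
          simp only [craigF, Pi.add_apply]
          split_ifs <;> push_cast <;> ring } with hφdef
    have hφ : ∀ c, φ c = craigF m ((p : ℚ) ^ a') (p ^ b') c := fun c => rfl
    have hrange : φ.range = (((p : ℚ) ^ a') • craigL (m + 2) (p ^ b')).toAddSubgroup := by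
      ext x
      simp only [AddMonoidHom.mem_range, Submodule.mem_toAddSubgroup,
        mem_smul_craigL, hφ]
      exact ⟨fun ⟨c, h⟩ => ⟨c, h.symm⟩, fun ⟨c, h⟩ => ⟨c, h.symm⟩⟩
    have e1 : (p : ℚ) ^ a' * (p : ℚ) ^ (a - a') = (p : ℚ) ^ a := by
      rw [← pow_add]; congr 1; omega
    have e2 : (p : ℚ) ^ (a' + b') * (p : ℚ) ^ (a + b - (a' + b')) = (p : ℚ) ^ (a + b) := by
      rw [← pow_add]; congr 1; omega
    have hcomap : ((((p : ℚ) ^ a) • craigL (m + 2) (p ^ b)).toAddSubgroup).comap φ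
        = AddSubgroup.pi Set.univ (fun i => AddSubgroup.zmultiples
            ((p : ℤ) ^ (if i = Fin.last (m + 1) then a - a' else a + b - (a' + b')))) := by
      ext c
      simp only [AddSubgroup.mem_comap, Submodule.mem_toAddSubgroup, AddSubgroup.mem_pi,
        Set.mem_univ, forall_true_left, Int.mem_zmultiples_iff, mem_smul_craigL, hφ]
      constructor
      · rintro ⟨c', hc'⟩ i
        have hl := congrFun hc' (Fin.last (m + 1))
        simp [craigF] at hl
        by_cases hi : i = Fin.last (m + 1)
        · subst hi
          rw [if_pos rfl]
          have hzq : (p : ℚ) ^ a' * (c (Fin.last (m + 1)) : ℚ)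
              = (p : ℚ) ^ a' * ((p : ℚ) ^ (a - a') * (c' (Fin.last (m + 1)) : ℚ)) := by
            linear_combination hl - (c' (Fin.last (m + 1)) : ℚ) * e1
          have hz : (p : ℤ) ^ a' * c (Fin.last (m + 1))
              = (p : ℤ) ^ a' * ((p : ℤ) ^ (a - a') * c' (Fin.last (m + 1))) := by
            exact_mod_cast hzq
          exact ⟨c' _, mul_left_cancel₀ (pow_ne_zero _ hpZ) hz⟩
        · rw [if_neg hi]
          have hii := congrFun hc' i
          simp [craigF, hi] at hii
          have hzq : (p : ℚ) ^ (a' + b') * (c i : ℚ)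
              = (p : ℚ) ^ (a' + b') * ((p : ℚ) ^ (a + b - (a' + b')) * (c' i : ℚ)) := by
            linear_combination hii - craigV (m + 2) i * hl - (c' i : ℚ) * e2
          have hz : (p : ℤ) ^ (a' + b') * c i
              = (p : ℤ) ^ (a' + b') * ((p : ℤ) ^ (a + b - (a' + b')) * c' i) := by
            exact_mod_cast hzq
          exact ⟨c' i, mul_left_cancel₀ (pow_ne_zero _ hpZ) hz⟩
      · intro hd
        choose k hk using hd
        refine ⟨k, ?_⟩
        funext i
        by_cases hi : i = Fin.last (m + 1)
        · subst hi
          simp only [craigF, if_pos rfl]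
          rw [hk (Fin.last (m + 1))]
          rw [if_pos rfl]
          push_cast
          linear_combination (k (Fin.last (m + 1)) : ℚ) * e1
        · simp only [craigF, if_neg hi, if_pos rfl]
          rw [hk i, hk (Fin.last (m + 1)), if_pos rfl, if_neg hi]
          push_cast
          have e2' : (p : ℚ) ^ a' * ((p : ℚ) ^ (a + b - (a' + b')) * (p : ℚ) ^ b')
              = (p : ℚ) ^ a * (p : ℚ) ^ b := by
            rw [← pow_add, ← pow_add, ← pow_add]; congr 1; omega
          linear_combination (k i : ℚ) * e2'
            + ((k (Fin.last (m + 1)) : ℚ) * craigV (m + 2) i) * e1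
    have hidx : subIndex (((p : ℚ) ^ a) • craigL (m + 2) (p ^ b))
        (((p : ℚ) ^ a') • craigL (m + 2) (p ^ b'))
        = p ^ ((a + b - (a' + b')) * (m + 1) + (a - a')) := by
      unfold subIndex
      rw [← hrange, AddMonoidHom.range_eq_map, ← AddSubgroup.relIndex_comap,
        AddSubgroup.relIndex_top_right, hcomap, AddSubgroup.index_pi]
      simp only [Int.index_zmultiples, Int.natAbs_pow, Int.natAbs_natCast]
      rw [Fin.prod_univ_castSucc, if_pos rfl]
      have hcs : ∀ i : Fin (m + 1), (Fin.castSucc i = Fin.last (m + 1)) = False :=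
        fun i => eq_false (Fin.castSucc_lt_last i).ne
      simp only [hcs, if_false]
      rw [Finset.prod_const, Finset.card_univ, Fintype.card_fin, ← pow_mul, ← pow_add]
    rw [hidx]
    have hE : ((a : ℤ) - a') * ((m + 2 : ℕ) : ℤ) + ((b : ℤ) - b') * (((m + 2 : ℕ) : ℤ) - 1)
        = (((a + b - (a' + b')) * (m + 1) + (a - a') : ℕ) : ℤ) := by
      push_cast [Nat.cast_sub h1, Nat.cast_sub h2]
      ring
    rw [hE, zpow_natCast]
    push_cast
    ring
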